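/- If φ avoids Ω₁, then each f_i (1 ≤ i ≤ p−1) is a derivation of F_φ, and every derivation D of F_φ can be written uniquely as D = ad(x) + λ_1 f_1 + … + λ_{p−1} f_{p−1} with x ∈ F_φ and λ_1, …, λ_{p−1} ∈ ℂ, where ad(x) denotes the inner derivation y ↦ [x,y]. -/

import Mathlib

open scoped BigOperators

noncomputable section

/-- The underlying space ℂ^{2p} of the Lie algebra `F_φ`. -/
abbrev V (p : ℕ) : Type := Fin (2*p) → ℂ

/-- The space of bilinear maps ℂ^{2p} × ℂ^{2p} → ℂ^{2p}. -/
abbrev Bil (p : ℕ) : Type := V p →ₗ[ℂ] V p →ₗ[ℂ] V p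

/-- The basis vector `X j` (1-indexed, j = 1, …, 2p). -/
def X (p j : ℕ) : V p := fun i => if (i : ℕ) + 1 = j then 1 else 0

/-- The coordinate functional dual to `X j` (1-indexed). -/
def coordL (p j : ℕ) : V p →ₗ[ℂ] ℂ :=
  if h : j - 1 < 2*p then LinearMap.proj (⟨j - 1, h⟩ : Fin (2*p)) else 0

/-- The elementary alternating bilinear map `(x,y) ↦ (x_a y_b − x_b y_a) • v`
(indices 1-based). -/
def elem (p a b : ℕ) (v : V p) : Bil p :=
  (coordL p a).smulRight ((coordL p b).smulRight v)
    - (coordL p b).smulRight ((coordL p a).smulRight v)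

/-- The Lie bracket of the frobeniusian model algebra `F_φ`:
`[X_1,X_2] = −X_1`, `[X_{2k+1},X_{2k+2}] = −X_1`, `[X_2,X_{2k+1}] = −φ_k X_{2k+1}`,
`[X_2,X_{2k+2}] = (1+φ_k) X_{2k+2}` for `1 ≤ k ≤ p−1`. -/
def mu (p : ℕ) (φ : ℕ → ℂ) : Bil p :=
  elem p 1 2 (-(X p 1)) +
    ∑ k ∈ Finset.Icc 1 (p-1),
      (elem p (2*k+1) (2*k+2) (-(X p 1)) + elem p 2 (2*k+1) (-(φ k) • X p (2*k+1))
        + elem p 2 (2*k+2) ((1 + φ k) • X p (2*k+2)))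

/-- `φ` avoids the set `Ω₁`. -/
def AvoidsOmega1 (p : ℕ) (φ : ℕ → ℂ) : Prop :=
  ∀ i j : ℕ, 1 ≤ i → i ≤ p - 1 → 1 ≤ j → j ≤ p - 1 →
    1 + φ i + φ j ≠ 0 ∧ 2 + φ i + φ j ≠ 0 ∧ (i ≠ j → φ i ≠ φ j) ∧
      φ i ≠ 0 ∧ φ i ≠ -1 ∧ 2 * φ i + 1 ≠ 0

/-- `φ` avoids the set `Ω = Ω₁ ∪ Ω₂`. -/
def AvoidsOmega (p : ℕ) (φ : ℕ → ℂ) : Prop :=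
  AvoidsOmega1 p φ ∧
    ∀ i j : ℕ, 1 ≤ i → i ≤ p - 1 → 1 ≤ j → j ≤ p - 1 →
      (i ≠ j → 1 + φ i - φ j ≠ 0) ∧ φ i + φ j ≠ 0 ∧ 2 + φ i ≠ 0 ∧ 1 - φ i ≠ 0 ∧
        1 + 2*φ i - φ j ≠ 0 ∧ 1 + 2*φ i + φ j ≠ 0 ∧ 2*φ i - φ j ≠ 0 ∧ 2 + 2*φ i + φ j ≠ 0

/-- The space of derivations of a bilinear bracket `B` on `ℂ^{2p}`. -/
def derSub (p : ℕ) (B : Bil p) : Submodule ℂ (V p →ₗ[ℂ] V p) where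
  carrier := {D | ∀ x y, D (B x y) = B (D x) y + B x (D y)}
  add_mem' := by
    intro D E hD hE x y
    simp only [LinearMap.add_apply, hD x y, hE x y, map_add, LinearMap.add_apply]
    abel
  zero_mem' := by intro x y; simp
  smul_mem' := by
    intro c D hD x y
    simp only [LinearMap.smul_apply, hD x y, map_smul, LinearMap.map_smul₂,
      LinearMap.smul_apply, smul_add]

/-- The grading subspaces: `g_0 = ℂ X_2`, `g_1 = ⟨X_3,…,X_{2p}⟩`, `g_2 = ℂ X_1`,
and `g_m = 0` otherwise. -/
def gr (p : ℕ) : ℤ → Submodule ℂ (V p) := fun m =>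
  if m = 0 then Submodule.span ℂ {X p 2}
  else if m = 1 then Submodule.span ℂ {v | ∃ j, 3 ≤ j ∧ j ≤ 2*p ∧ v = X p j}
  else if m = 2 then Submodule.span ℂ {X p 1}
  else ⊥

/-- The space of 2-cocycles of `F_φ` with coefficients in the adjoint module
(2-cochains are alternating bilinear maps). -/
def Z2 (p : ℕ) (φ : ℕ → ℂ) : Submodule ℂ (Bil p) where
  carrier := {ψ | (∀ x, ψ x x = 0) ∧
    ∀ x y z, mu p φ x (ψ y z) - mu p φ y (ψ x z) + mu p φ z (ψ x y)
      - ψ (mu p φ x y) z + ψ (mu p φ x z) y - ψ (mu p φ y z) x = 0}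
  add_mem' := by
    rintro ψ₁ ψ₂ ⟨h₁a, h₁c⟩ ⟨h₂a, h₂c⟩
    constructor
    · intro x; simp [h₁a x, h₂a x]
    · intro x y z
      have e₁ := h₁c x y z
      have e₂ := h₂c x y z
      simp only [LinearMap.add_apply, map_add]
      rw [← sub_eq_zero] at *
      simp only [sub_zero] at *
      linear_combination (norm := module) e₁ + e₂
  zero_mem' := by
    constructor
    · intro x; simp
    · intro x y z; simp
  smul_mem' := by
    rintro c ψ ⟨ha, hc⟩
    constructor
    · intro x; simp [ha x]
    · intro x y z
      have e := hc x y z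
      simp only [LinearMap.smul_apply, map_smul]
      linear_combination (norm := module) c • e

/-- The space of 2-coboundaries of `F_φ` with coefficients in the adjoint module. -/
def B2 (p : ℕ) (φ : ℕ → ℂ) : Submodule ℂ (Bil p) where
  carrier := {ψ | ∃ f : V p →ₗ[ℂ] V p,
    ∀ x y, ψ x y = mu p φ x (f y) - mu p φ y (f x) - f (mu p φ x y)}
  add_mem' := by
    rintro ψ₁ ψ₂ ⟨f₁, h₁⟩ ⟨f₂, h₂⟩
    refine ⟨f₁ + f₂, fun x y => ?_⟩
    simp only [LinearMap.add_apply, h₁ x y, h₂ x y, map_add]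
    abel
  zero_mem' := ⟨0, by intro x y; simp⟩
  smul_mem' := by
    rintro c ψ ⟨f, h⟩
    refine ⟨c • f, fun x y => ?_⟩
    simp only [LinearMap.smul_apply, h x y, map_smul, smul_sub]

/-- The 2-cochains of degree `k` with respect to the grading `gr`. -/
def degSub (p : ℕ) (k : ℤ) : Submodule ℂ (Bil p) where
  carrier := {ψ | ∀ (a b : ℤ), ∀ x ∈ gr p a, ∀ y ∈ gr p b, ψ x y ∈ gr p (a + b + k)}
  add_mem' := by
    intro ψ₁ ψ₂ h₁ h₂ a b x hx y hy
    simpa using Submodule.add_mem _ (h₁ a b x hx y hy) (h₂ a b x hx y hy)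
  zero_mem' := by intro a b x hx y hy; simp
  smul_mem' := by
    intro c ψ h a b x hx y hy
    simpa using Submodule.smul_mem _ c (h a b x hx y hy)

attribute [local instance] LieRing.ofAssociativeRing

/-- The derivations of `F_φ` as a Lie subalgebra of `End(ℂ^{2p})`. -/
def derLie (p : ℕ) (φ : ℕ → ℂ) : LieSubalgebra ℂ (Module.End ℂ (V p)) :=
  { derSub p (mu p φ) with
    lie_mem' := by
      intro D E hD hE
      have hD' : ∀ x y, D (mu p φ x y) = mu p φ (D x) y + mu p φ x (D y) := hD
      have hE' : ∀ x y, E (mu p φ x y) = mu p φ (E x) y + mu p φ x (E y) := hE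
      intro x y
      simp only [Ring.lie_def, LinearMap.sub_apply, Module.End.mul_apply]
      rw [hE' x y, hD' x y, map_add, map_add, hD' (E x) y, hD' x (E y),
        hE' (D x) y, hE' x (D y)]
      simp only [map_sub, LinearMap.sub_apply]
      abel }

/-- The derivation `f_i` of `F_φ` : `f_i(X_{2i+1}) = X_{2i+1}`, `f_i(X_{2i+2}) = −X_{2i+2}`. -/
def fDer (p i : ℕ) : V p →ₗ[ℂ] V p :=
  (coordL p (2*i+1)).smulRight (X p (2*i+1)) - (coordL p (2*i+2)).smulRight (X p (2*i+2))

/-- The 2-cocycle `ψ_k = ψ^{2k+1}_{2,2k+1}` :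
`(X_2,X_{2k+1}) ↦ X_{2k+1}`, `(X_2,X_{2k+2}) ↦ −X_{2k+2}`. -/
def psiK (p k : ℕ) : Bil p :=
  elem p 2 (2*k+1) (X p (2*k+1)) - elem p 2 (2*k+2) (X p (2*k+2))

/-- The 2-cocycle `ψ^2_{12}` spanning `Z²_{−2}`. -/
def psiM2 (p : ℕ) (φ : ℕ → ℂ) : Bil p :=
  elem p 1 2 (X p 2) +
    ∑ k ∈ Finset.Icc 1 (p-1),
      (elem p (2*k+1) (2*k+2) (X p 2) + elem p 1 (2*k+1) (-(φ k) • X p (2*k+1))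
        + elem p 1 (2*k+2) ((1 + φ k) • X p (2*k+2)))

/-- The 2-cocycle `ψ^1_{2,j}` : `(X_2,X_j) ↦ X_1`. -/
def psiTop (p j : ℕ) : Bil p := elem p 2 j (X p 1)


/-! ### Plain-function versions of the relevant spaces.
We realise spaces of (multi)linear maps as submodules of plain function spaces,
the (bi)linearity being part of the defining conditions. -/

/-- `ψ : ℂ^{2p} × ℂ^{2p} → ℂ^{2p}` is bilinear. -/
def IsBil (p : ℕ) (ψ : V p → V p → V p) : Prop :=
  (∀ x x' y, ψ (x + x') y = ψ x y + ψ x' y) ∧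
  (∀ (c : ℂ) (x y), ψ (c • x) y = c • ψ x y) ∧
  (∀ x y y', ψ x (y + y') = ψ x y + ψ x y') ∧
  (∀ (c : ℂ) (x y), ψ x (c • y) = c • ψ x y)

/-- The space of derivations of a bilinear bracket `B` on `ℂ^{2p}`, realised inside
the space of all maps `ℂ^{2p} → ℂ^{2p}` (linearity is part of the conditions). -/
def derF (p : ℕ) (B : Bil p) : Submodule ℂ (V p → V p) where
  carrier := {D | (∀ x y, D (x + y) = D x + D y) ∧ (∀ (c : ℂ) (x), D (c • x) = c • D x) ∧
    ∀ x y, D (B x y) = B (D x) y + B x (D y)}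
  add_mem' := by
    rintro D E ⟨hDa, hDs, hDd⟩ ⟨hEa, hEs, hEd⟩
    refine ⟨fun x y => ?_, fun c x => ?_, fun x y => ?_⟩
    · simp only [Pi.add_apply, hDa, hEa]; abel
    · simp only [Pi.add_apply, hDs, hEs, smul_add]
    · simp only [Pi.add_apply, hDd x y, hEd x y, map_add, LinearMap.add_apply]; abel
  zero_mem' := by
    refine ⟨fun x y => ?_, fun c x => ?_, fun x y => ?_⟩ <;> simp
  smul_mem' := by
    rintro c D ⟨hDa, hDs, hDd⟩
    refine ⟨fun x y => ?_, fun c' x => ?_, fun x y => ?_⟩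
    · simp only [Pi.smul_apply, hDa, smul_add]
    · simp only [Pi.smul_apply, hDs, smul_comm c c']
    · simp only [Pi.smul_apply, hDd x y, map_smul, LinearMap.smul_apply, smul_add]

/-- The space of inner derivations `ad(v) = B(v,·)` of a bilinear bracket `B`. -/
def innerF (p : ℕ) (B : Bil p) : Submodule ℂ (V p → V p) where
  carrier := {D | ∃ v, D = fun y => B v y}
  add_mem' := by
    rintro D E ⟨v, rfl⟩ ⟨w, rfl⟩
    exact ⟨v + w, by funext y; simp [map_add]⟩
  zero_mem' := ⟨0, by funext y; simp⟩
  smul_mem' := by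
    rintro c D ⟨v, rfl⟩
    exact ⟨c • v, by funext y; simp [map_smul]⟩

/-- The space of 2-cocycles of `F_φ` with coefficients in the adjoint module;
2-cochains are alternating bilinear maps `ℂ^{2p} × ℂ^{2p} → ℂ^{2p}`. -/
def Z2F (p : ℕ) (φ : ℕ → ℂ) : Submodule ℂ (V p → V p → V p) where
  carrier := {ψ | IsBil p ψ ∧ (∀ x, ψ x x = 0) ∧
    ∀ x y z, mu p φ x (ψ y z) - mu p φ y (ψ x z) + mu p φ z (ψ x y)
      - ψ (mu p φ x y) z + ψ (mu p φ x z) y - ψ (mu p φ y z) x = 0}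
  add_mem' := by
    rintro ψ₁ ψ₂ ⟨⟨hb₁, hb₂, hb₃, hb₄⟩, ha, hc⟩ ⟨⟨hb₁', hb₂', hb₃', hb₄'⟩, ha', hc'⟩
    refine ⟨⟨fun x x' y => ?_, fun c x y => ?_, fun x y y' => ?_, fun c x y => ?_⟩,
      fun x => ?_, fun x y z => ?_⟩
    · simp only [Pi.add_apply, hb₁, hb₁']; abel
    · simp only [Pi.add_apply, hb₂, hb₂', smul_add]
    · simp only [Pi.add_apply, hb₃, hb₃']; abel
    · simp only [Pi.add_apply, hb₄, hb₄', smul_add]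
    · simp only [Pi.add_apply, ha x, ha' x]; abel
    · have e := hc x y z
      have e' := hc' x y z
      simp only [Pi.add_apply, map_add]
      linear_combination (norm := module) e + e'
  zero_mem' := by
    refine ⟨⟨fun x x' y => ?_, fun c x y => ?_, fun x y y' => ?_, fun c x y => ?_⟩,
      fun x => ?_, fun x y z => ?_⟩ <;> simp
  smul_mem' := by
    rintro c ψ ⟨⟨hb₁, hb₂, hb₃, hb₄⟩, ha, hc⟩
    refine ⟨⟨fun x x' y => ?_, fun c' x y => ?_, fun x y y' => ?_, fun c' x y => ?_⟩,
      fun x => ?_, fun x y z => ?_⟩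
    · simp only [Pi.smul_apply, hb₁, smul_add]
    · simp only [Pi.smul_apply, hb₂, smul_comm c c']
    · simp only [Pi.smul_apply, hb₃, smul_add]
    · simp only [Pi.smul_apply, hb₄, smul_comm c c']
    · simp only [Pi.smul_apply, ha x, smul_zero]
    · have e := hc x y z
      simp only [Pi.smul_apply, map_smul]
      linear_combination (norm := module) c • e

/-- The space of 2-coboundaries of `F_φ` with coefficients in the adjoint module. -/
def B2F (p : ℕ) (φ : ℕ → ℂ) : Submodule ℂ (V p → V p → V p) where
  carrier := {ψ | ∃ f : V p →ₗ[ℂ] V p,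
    ∀ x y, ψ x y = mu p φ x (f y) - mu p φ y (f x) - f (mu p φ x y)}
  add_mem' := by
    rintro ψ₁ ψ₂ ⟨f₁, h₁⟩ ⟨f₂, h₂⟩
    refine ⟨f₁ + f₂, fun x y => ?_⟩
    simp only [Pi.add_apply, h₁ x y, h₂ x y, map_add, LinearMap.add_apply]
    abel
  zero_mem' := ⟨0, by intro x y; simp⟩
  smul_mem' := by
    rintro c ψ ⟨f, h⟩
    refine ⟨c • f, fun x y => ?_⟩
    simp only [Pi.smul_apply, h x y, map_smul, LinearMap.smul_apply, smul_sub]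

/-- The 2-cochains of degree `k` with respect to the grading `gr`. -/
def degF (p : ℕ) (k : ℤ) : Submodule ℂ (V p → V p → V p) where
  carrier := {ψ | ∀ (a b : ℤ), ∀ x ∈ gr p a, ∀ y ∈ gr p b, ψ x y ∈ gr p (a + b + k)}
  add_mem' := by
    intro ψ₁ ψ₂ h₁ h₂ a b x hx y hy
    simpa using Submodule.add_mem _ (h₁ a b x hx y hy) (h₂ a b x hx y hy)
  zero_mem' := by intro a b x hx y hy; simp
  smul_mem' := by
    intro c ψ h a b x hx y hy
    simpa using Submodule.smul_mem _ c (h a b x hx y hy)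

/-- A bilinear map, viewed as a plain function. -/
def toF (p : ℕ) (B : Bil p) : V p → V p → V p := fun x y => B x y

section Aux
variable (p : ℕ) (φ : ℕ → ℂ)

lemma coordL_apply (m : ℕ) (h : m - 1 < 2*p) (v : V p) :
    coordL p m v = v ⟨m - 1, h⟩ := by
  simp [coordL, h]

lemma coordL_succ (t : Fin (2*p)) (v : V p) : coordL p ((t:ℕ)+1) v = v t := by
  have ht := t.isLt
  have h : (t:ℕ)+1-1 < 2*p := by omega
  rw [coordL_apply p _ h]
  have : (⟨(t:ℕ)+1-1, h⟩ : Fin (2*p)) = t := Fin.ext (by simp)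
  rw [this]

lemma coordL_X (a b : ℕ) (h1 : 1 ≤ a) (h2 : a ≤ 2*p) :
    coordL p a (X p b) = if a = b then 1 else 0 := by
  have h : a - 1 < 2*p := by omega
  rw [coordL_apply p a h]
  show (if (a-1) + 1 = b then (1:ℂ) else 0) = _
  have : a - 1 + 1 = a := by omega
  rw [this]

lemma vext {v v' : V p} (h : ∀ m, 1 ≤ m → m ≤ 2*p → coordL p m v = coordL p m v') :
    v = v' := by
  funext t
  have ht := t.isLt
  have := h ((t:ℕ)+1) (by omega) (by omega)
  rwa [coordL_succ, coordL_succ] at this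

lemma elem_apply (a b : ℕ) (v x y : V p) :
    elem p a b v x y = (coordL p a x * coordL p b y - coordL p b x * coordL p a y) • v := by
  simp [elem, sub_smul, mul_smul]

lemma mu_apply (x y : V p) :
    mu p φ x y =
      (coordL p 1 x * coordL p 2 y - coordL p 2 x * coordL p 1 y) • (-(X p 1)) +
      ∑ k ∈ Finset.Icc 1 (p-1),
        ((coordL p (2*k+1) x * coordL p (2*k+2) y - coordL p (2*k+2) x * coordL p (2*k+1) y) • (-(X p 1))
        + (coordL p 2 x * coordL p (2*k+1) y - coordL p (2*k+1) x * coordL p 2 y) • (-(φ k) • X p (2*k+1))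
        + (coordL p 2 x * coordL p (2*k+2) y - coordL p (2*k+2) x * coordL p 2 y) • ((1 + φ k) • X p (2*k+2))) := by
  simp only [mu, LinearMap.add_apply, LinearMap.sum_apply, elem_apply]


lemma mu_X1 (hp : 2 ≤ p) (x : V p) : mu p φ x (X p 1) = coordL p 2 x • X p 1 := by
  rw [mu_apply]
  rw [coordL_X p 2 1 (by omega) (by omega), coordL_X p 1 1 (by omega) (by omega)]
  rw [Finset.sum_eq_zero, add_zero]
  · norm_num
  · intro k hk
    simp only [Finset.mem_Icc] at hk
    rw [coordL_X p (2*k+1) 1 (by omega) (by omega), coordL_X p (2*k+2) 1 (by omega) (by omega)]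
    have h1 : ¬(2*k+1 = 1) := by omega
    have h2 : ¬(2*k+2 = 1) := by omega
    simp [h1, h2, show k ≠ 0 by omega]

lemma mu_X2 (hp : 2 ≤ p) (x : V p) : mu p φ x (X p 2) = (-(coordL p 1 x)) • X p 1 +
    ∑ k ∈ Finset.Icc 1 (p-1),
      ((φ k * coordL p (2*k+1) x) • X p (2*k+1)
        + (-((1+φ k) * coordL p (2*k+2) x)) • X p (2*k+2)) := by
  rw [mu_apply]
  rw [coordL_X p 2 2 (by omega) (by omega), coordL_X p 1 2 (by omega) (by omega)]
  congr 1
  · norm_num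
  · refine Finset.sum_congr rfl fun k hk => ?_
    simp only [Finset.mem_Icc] at hk
    rw [coordL_X p (2*k+1) 2 (by omega) (by omega), coordL_X p (2*k+2) 2 (by omega) (by omega)]
    have h1 : ¬(2*k+1 = 2) := by omega
    have h2 : ¬(2*k+2 = 2) := by omega
    simp only [h1, h2, if_false, if_true, reduceIte, mul_zero, mul_one, zero_mul, one_mul,
      zero_sub, sub_zero, zero_smul, smul_zero, add_zero, zero_add]
    module

lemma mu_Xodd (hp : 2 ≤ p) (k : ℕ) (hk1 : 1 ≤ k) (hk2 : k ≤ p-1) (x : V p) :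
    mu p φ x (X p (2*k+1)) = coordL p (2*k+2) x • X p 1
      + (-(φ k * coordL p 2 x)) • X p (2*k+1) := by
  rw [mu_apply]
  rw [coordL_X p 2 (2*k+1) (by omega) (by omega), coordL_X p 1 (2*k+1) (by omega) (by omega)]
  have h1 : ¬(2 = 2*k+1) := by omega
  have h2 : ¬(1 = 2*k+1) := by omega
  rw [Finset.sum_eq_single_of_mem k (by simp only [Finset.mem_Icc]; omega)]
  · rw [coordL_X p (2*k+1) (2*k+1) (by omega) (by omega),
      coordL_X p (2*k+2) (2*k+1) (by omega) (by omega)]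
    have h3 : ¬(2*k+2 = 2*k+1) := by omega
    simp only [h1, h2, h3, if_false, if_true, reduceIte, mul_zero, mul_one, zero_mul, one_mul,
      zero_sub, sub_zero, zero_smul, smul_zero, add_zero, zero_add]
    module
  · intro k' hk' hne
    simp only [Finset.mem_Icc] at hk'
    rw [coordL_X p (2*k'+1) (2*k+1) (by omega) (by omega),
      coordL_X p (2*k'+2) (2*k+1) (by omega) (by omega)]
    have h3 : ¬(2*k'+1 = 2*k+1) := by omega
    have h4 : ¬(2*k'+2 = 2*k+1) := by omega
    simp [h1, h3, h4, hne]

lemma mu_Xeven (hp : 2 ≤ p) (k : ℕ) (hk1 : 1 ≤ k) (hk2 : k ≤ p-1) (x : V p) :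
    mu p φ x (X p (2*k+2)) = (-(coordL p (2*k+1) x)) • X p 1
      + ((1+φ k) * coordL p 2 x) • X p (2*k+2) := by
  rw [mu_apply]
  rw [coordL_X p 2 (2*k+2) (by omega) (by omega), coordL_X p 1 (2*k+2) (by omega) (by omega)]
  have h1 : ¬(2 = 2*k+2) := by omega
  have h2 : ¬(1 = 2*k+2) := by omega
  rw [Finset.sum_eq_single_of_mem k (by simp only [Finset.mem_Icc]; omega)]
  · rw [coordL_X p (2*k+1) (2*k+2) (by omega) (by omega),
      coordL_X p (2*k+2) (2*k+2) (by omega) (by omega)]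
    have h3 : ¬(2*k+1 = 2*k+2) := by omega
    simp only [h1, h2, h3, if_false, if_true, reduceIte, mul_zero, mul_one, zero_mul, one_mul,
      zero_sub, sub_zero, zero_smul, smul_zero, add_zero, zero_add]
    module
  · intro k' hk' hne
    simp only [Finset.mem_Icc] at hk'
    rw [coordL_X p (2*k'+1) (2*k+2) (by omega) (by omega),
      coordL_X p (2*k'+2) (2*k+2) (by omega) (by omega)]
    have h3 : ¬(2*k'+1 = 2*k+2) := by omega
    have h4 : ¬(2*k'+2 = 2*k+2) := by omega
    simp [h1, h3, h4, hne, show k ≠ 0 by omega, show ¬(2*k' = 2*k+1) by omega]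


lemma mu_swap (x y : V p) : mu p φ x y = - mu p φ y x := by
  rw [mu_apply p φ x y, mu_apply p φ y x, neg_add, ← Finset.sum_neg_distrib]
  congr 1
  · module
  · refine Finset.sum_congr rfl fun k _ => ?_
    module

lemma mu_X1_left (hp : 2 ≤ p) (y : V p) :
    mu p φ (X p 1) y = (-(coordL p 2 y)) • X p 1 := by
  rw [mu_swap, mu_X1 p φ hp]; module

lemma mu_X2_left (hp : 2 ≤ p) (y : V p) : mu p φ (X p 2) y = coordL p 1 y • X p 1 +
    ∑ k ∈ Finset.Icc 1 (p-1),
      ((-(φ k * coordL p (2*k+1) y)) • X p (2*k+1)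
        + ((1+φ k) * coordL p (2*k+2) y) • X p (2*k+2)) := by
  rw [mu_swap, mu_X2 p φ hp, neg_add, ← Finset.sum_neg_distrib]
  congr 1
  · module
  · refine Finset.sum_congr rfl fun k _ => ?_
    module

lemma mu_Xodd_left (hp : 2 ≤ p) (k : ℕ) (hk1 : 1 ≤ k) (hk2 : k ≤ p-1) (y : V p) :
    mu p φ (X p (2*k+1)) y = (-(coordL p (2*k+2) y)) • X p 1
      + (φ k * coordL p 2 y) • X p (2*k+1) := by
  rw [mu_swap, mu_Xodd p φ hp k hk1 hk2]; module

lemma mu_Xeven_left (hp : 2 ≤ p) (k : ℕ) (hk1 : 1 ≤ k) (hk2 : k ≤ p-1) (y : V p) :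
    mu p φ (X p (2*k+2)) y = coordL p (2*k+1) y • X p 1
      + (-((1+φ k) * coordL p 2 y)) • X p (2*k+2) := by
  rw [mu_swap, mu_Xeven p φ hp k hk1 hk2]; module

lemma coordL_comb (f g : ℕ → ℂ) (m : ℕ) (hm1 : 1 ≤ m) (hm2 : m ≤ 2*p) :
    coordL p m (∑ k ∈ Finset.Icc 1 (p-1), (f k • X p (2*k+1) + g k • X p (2*k+2))) =
      if 3 ≤ m then (if m % 2 = 1 then f (m/2) else g (m/2 - 1)) else 0 := by
  rw [map_sum]
  simp only [map_add, map_smul, smul_eq_mul]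
  have key : ∀ k ∈ Finset.Icc 1 (p-1),
      f k * coordL p m (X p (2*k+1)) + g k * coordL p m (X p (2*k+2)) =
      f k * (if m = 2*k+1 then 1 else 0) + g k * (if m = 2*k+2 then 1 else 0) := by
    intro k hk
    rw [coordL_X p m _ hm1 hm2, coordL_X p m _ hm1 hm2]
  rw [Finset.sum_congr rfl key]
  by_cases h3 : 3 ≤ m
  · by_cases ho : m % 2 = 1
    · rw [Finset.sum_eq_single_of_mem (m/2) (by simp only [Finset.mem_Icc]; omega)]
      · have e1 : m = 2*(m/2)+1 := by omega
        have e2 : ¬ (m = 2*(m/2)+2) := by omega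
        rw [if_pos e1, if_neg e2, if_pos h3, if_pos ho]
        ring
      · intro k hk hne
        simp only [Finset.mem_Icc] at hk
        have e1 : ¬(m = 2*k+1) := by omega
        have e2 : ¬(m = 2*k+2) := by omega
        simp [e1, e2]
    · rw [Finset.sum_eq_single_of_mem (m/2 - 1) (by simp only [Finset.mem_Icc]; omega)]
      · have e1 : ¬ (m = 2*(m/2-1)+1) := by omega
        have e2 : m = 2*(m/2-1)+2 := by omega
        rw [if_pos e2, if_neg e1, if_pos h3, if_neg ho]
        ring
      · intro k hk hne
        simp only [Finset.mem_Icc] at hk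
        have e1 : ¬(m = 2*k+1) := by omega
        have e2 : ¬(m = 2*k+2) := by omega
        simp [e1, e2]
  · rw [if_neg h3, Finset.sum_eq_zero]
    intro k hk
    simp only [Finset.mem_Icc] at hk
    have e1 : ¬(m = 2*k+1) := by omega
    have e2 : ¬(m = 2*k+2) := by omega
    simp [e1, e2]


lemma fDer_apply (i : ℕ) (x : V p) :
    fDer p i x = coordL p (2*i+1) x • X p (2*i+1) - coordL p (2*i+2) x • X p (2*i+2) := by
  simp [fDer]

lemma coordL_fDer (hp : 2 ≤ p) (i : ℕ) (hi1 : 1 ≤ i) (hi2 : i ≤ p-1) (m : ℕ)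
    (hm1 : 1 ≤ m) (hm2 : m ≤ 2*p) (x : V p) :
    coordL p m (fDer p i x) =
      if m = 2*i+1 then coordL p (2*i+1) x
      else if m = 2*i+2 then -(coordL p (2*i+2) x) else 0 := by
  rw [fDer_apply, map_sub, map_smul, map_smul, coordL_X p m _ hm1 hm2, coordL_X p m _ hm1 hm2]
  by_cases h1 : m = 2*i+1
  · have h2 : ¬(m = 2*i+2) := by omega
    simp [h1, h2]
  · by_cases h2 : m = 2*i+2
    · simp [h1, h2]
    · simp [h1, h2]

lemma fDer_X (hp : 2 ≤ p) (i : ℕ) (hi1 : 1 ≤ i) (hi2 : i ≤ p-1) (b : ℕ) :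
    fDer p i (X p b) =
      (if b = 2*i+1 then X p (2*i+1) else if b = 2*i+2 then -(X p (2*i+2)) else 0) := by
  rw [fDer_apply, coordL_X p _ b (by omega) (by omega), coordL_X p _ b (by omega) (by omega)]
  by_cases h1 : b = 2*i+1
  · subst h1
    simp [show ¬(2*i+2 = 2*i+1) by omega]
  · by_cases h2 : b = 2*i+2
    · subst h2
      simp [show ¬(2*i+1 = 2*i+2) by omega]
    · have h1' : ¬(2*i+1 = b) := fun h => h1 h.symm
      have h2' : ¬(2*i+2 = b) := fun h => h2 h.symm
      simp [h1, h2, h1', h2']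

lemma fDer_comb (hp : 2 ≤ p) (i : ℕ) (hi1 : 1 ≤ i) (hi2 : i ≤ p-1) (A B : ℕ → ℂ) :
    fDer p i (∑ k ∈ Finset.Icc 1 (p-1), (A k • X p (2*k+1) + B k • X p (2*k+2))) =
      A i • X p (2*i+1) - B i • X p (2*i+2) := by
  rw [map_sum]
  simp only [map_add, map_smul]
  rw [Finset.sum_eq_single_of_mem i (by simp only [Finset.mem_Icc]; omega)]
  · rw [fDer_X p hp i hi1 hi2 (2*i+1), fDer_X p hp i hi1 hi2 (2*i+2)]
    rw [if_pos rfl, if_neg (by omega), if_pos rfl]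
    module
  · intro k hk hne
    simp only [Finset.mem_Icc] at hk
    rw [fDer_X p hp i hi1 hi2 (2*k+1), fDer_X p hp i hi1 hi2 (2*k+2)]
    have e1 : ¬(2*k+1 = 2*i+1) := by omega
    have e2 : ¬(2*k+1 = 2*i+2) := by omega
    have e3 : ¬(2*k+2 = 2*i+1) := by omega
    have e4 : ¬(2*k+2 = 2*i+2) := by omega
    simp [e1, e2, e3, e4, hne, show ¬(2*k = 2*i+1) by omega]

lemma vdecomp (v : V p) : v = ∑ t : Fin (2*p), v t • X p ((t:ℕ)+1) := by
  funext s
  rw [Finset.sum_apply]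
  rw [Finset.sum_eq_single_of_mem s (Finset.mem_univ s)]
  · simp [X]
  · intro t ht hne
    have h : (t:ℕ) ≠ (s:ℕ) := fun h => hne (Fin.ext h)
    have h' : ¬((s:ℕ) + 1 = (t:ℕ) + 1) := by omega
    simp [X, h', h.symm]

lemma X_basis (t : Fin (2*p)) : (Pi.basisFun ℂ (Fin (2*p))) t = X p ((t:ℕ)+1) := by
  funext s
  by_cases h : s = t
  · subst h; simp [X, Pi.basisFun_apply, Pi.single_apply]
  · have h' : ¬((s:ℕ) + 1 = (t:ℕ) + 1) := fun hh => h (Fin.ext (by omega))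
    simp [X, Pi.basisFun_apply, Pi.single_apply, h, h', show ¬((s:ℕ) = t) from fun hh => h (Fin.ext hh)]

lemma vec_cases (m : ℕ) (h1 : 1 ≤ m) (h2 : m ≤ 2*p) :
    m = 1 ∨ m = 2 ∨ (∃ k, 1 ≤ k ∧ k ≤ p-1 ∧ m = 2*k+1) ∨
      (∃ k, 1 ≤ k ∧ k ≤ p-1 ∧ m = 2*k+2) := by
  by_cases e1 : m = 1
  · exact Or.inl e1
  by_cases e2 : m = 2
  · exact Or.inr (Or.inl e2)
  by_cases ho : m % 2 = 1
  · exact Or.inr (Or.inr (Or.inl ⟨m/2, by omega, by omega, by omega⟩))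
  · exact Or.inr (Or.inr (Or.inr ⟨m/2-1, by omega, by omega, by omega⟩))


lemma fDer_key (hp : 2 ≤ p) (i : ℕ) (hi1 : 1 ≤ i) (hi2 : i ≤ p-1) (x : V p)
    (b : ℕ) (hb1 : 1 ≤ b) (hb2 : b ≤ 2*p) :
    fDer p i (mu p φ x (X p b)) =
      mu p φ (fDer p i x) (X p b) + mu p φ x (fDer p i (X p b)) := by
  rcases vec_cases p b hb1 hb2 with rfl | rfl | ⟨k, hk1, hk2, rfl⟩ | ⟨k, hk1, hk2, rfl⟩
  · rw [mu_X1 p φ hp x, map_smul, fDer_X p hp i hi1 hi2 1,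
      if_neg (by omega), if_neg (by omega), mu_X1 p φ hp (fDer p i x),
      coordL_fDer p hp i hi1 hi2 2 (by omega) (by omega),
      if_neg (by omega), if_neg (by omega)]
    simp
  · rw [mu_X2 p φ hp x, map_add, map_smul, fDer_X p hp i hi1 hi2 1,
      if_neg (by omega), if_neg (by omega),
      fDer_comb p hp i hi1 hi2 (fun k => φ k * coordL p (2*k+1) x)
        (fun k => -((1+φ k) * coordL p (2*k+2) x)),
      fDer_X p hp i hi1 hi2 2, if_neg (by omega), if_neg (by omega),
      map_zero, mu_X2 p φ hp (fDer p i x),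
      coordL_fDer p hp i hi1 hi2 1 (by omega) (by omega),
      if_neg (by omega), if_neg (by omega)]
    rw [Finset.sum_eq_single_of_mem i (by simp only [Finset.mem_Icc]; omega)]
    · rw [coordL_fDer p hp i hi1 hi2 (2*i+1) (by omega) (by omega),
        coordL_fDer p hp i hi1 hi2 (2*i+2) (by omega) (by omega),
        if_pos rfl, if_neg (by omega), if_pos rfl]
      module
    · intro k hk hne
      simp only [Finset.mem_Icc] at hk
      rw [coordL_fDer p hp i hi1 hi2 (2*k+1) (by omega) (by omega),
        coordL_fDer p hp i hi1 hi2 (2*k+2) (by omega) (by omega),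
        if_neg (by omega), if_neg (by omega), if_neg (by omega), if_neg (by omega)]
      simp
  · by_cases hki : k = i
    · subst hki
      rw [mu_Xodd p φ hp k hk1 hk2 x, map_add, map_smul, map_smul,
        fDer_X p hp k hk1 hk2 1, if_neg (by omega), if_neg (by omega),
        fDer_X p hp k hk1 hk2 (2*k+1), if_pos rfl,
        mu_Xodd p φ hp k hk1 hk2 (fDer p k x),
        coordL_fDer p hp k hk1 hk2 (2*k+2) (by omega) (by omega),
        if_neg (by omega), if_pos rfl,
        coordL_fDer p hp k hk1 hk2 2 (by omega) (by omega),
        if_neg (by omega), if_neg (by omega),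
        mu_Xodd p φ hp k hk1 hk2 x]
      module
    · rw [mu_Xodd p φ hp k hk1 hk2 x, map_add, map_smul, map_smul,
        fDer_X p hp i hi1 hi2 1, if_neg (by omega), if_neg (by omega),
        fDer_X p hp i hi1 hi2 (2*k+1), if_neg (by omega), if_neg (by omega),
        mu_Xodd p φ hp k hk1 hk2 (fDer p i x),
        coordL_fDer p hp i hi1 hi2 (2*k+2) (by omega) (by omega),
        if_neg (by omega), if_neg (by omega),
        coordL_fDer p hp i hi1 hi2 2 (by omega) (by omega),
        if_neg (by omega), if_neg (by omega), map_zero]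
      simp
  · by_cases hki : k = i
    · subst hki
      rw [mu_Xeven p φ hp k hk1 hk2 x, map_add, map_smul, map_smul,
        fDer_X p hp k hk1 hk2 1, if_neg (by omega), if_neg (by omega),
        fDer_X p hp k hk1 hk2 (2*k+2), if_neg (by omega), if_pos rfl,
        mu_Xeven p φ hp k hk1 hk2 (fDer p k x),
        coordL_fDer p hp k hk1 hk2 (2*k+1) (by omega) (by omega),
        if_pos rfl,
        coordL_fDer p hp k hk1 hk2 2 (by omega) (by omega),
        if_neg (by omega), if_neg (by omega), map_neg,
        mu_Xeven p φ hp k hk1 hk2 x]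
      module
    · rw [mu_Xeven p φ hp k hk1 hk2 x, map_add, map_smul, map_smul,
        fDer_X p hp i hi1 hi2 1, if_neg (by omega), if_neg (by omega),
        fDer_X p hp i hi1 hi2 (2*k+2), if_neg (by omega), if_neg (by omega),
        mu_Xeven p φ hp k hk1 hk2 (fDer p i x),
        coordL_fDer p hp i hi1 hi2 (2*k+1) (by omega) (by omega),
        if_neg (by omega), if_neg (by omega),
        coordL_fDer p hp i hi1 hi2 2 (by omega) (by omega),
        if_neg (by omega), if_neg (by omega), map_zero]
      simp

lemma fDer_deriv (hp : 2 ≤ p) (i : ℕ) (hi1 : 1 ≤ i) (hi2 : i ≤ p-1) :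
    ∀ x y : V p, fDer p i (mu p φ x y) =
      mu p φ (fDer p i x) y + mu p φ x (fDer p i y) := by
  intro x y
  have h : (fDer p i) ∘ₗ (mu p φ x) =
      mu p φ (fDer p i x) + (mu p φ x) ∘ₗ (fDer p i) := by
    apply Module.Basis.ext (Pi.basisFun ℂ (Fin (2*p)))
    intro t
    have ht := t.isLt
    rw [X_basis]
    simp only [LinearMap.comp_apply, LinearMap.add_apply]
    exact fDer_key p φ hp i hi1 hi2 x ((t:ℕ)+1) (by omega) (by omega)
  have h2 := LinearMap.congr_fun h y
  simpa using h2


lemma sumf_X0 (hp : 2 ≤ p) (μ : Fin (p-1) → ℂ) (b : ℕ) (hb : b = 1 ∨ b = 2) :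
    ∑ i : Fin (p-1), μ i • fDer p ((i:ℕ)+1) (X p b) = 0 := by
  apply Finset.sum_eq_zero
  intro i _
  have hi := i.isLt
  rw [fDer_X p hp ((i:ℕ)+1) (by omega) (by omega) b, if_neg (by omega), if_neg (by omega)]
  simp

lemma sumf_Xodd (hp : 2 ≤ p) (μ : Fin (p-1) → ℂ) (k : ℕ) (hk1 : 1 ≤ k) (hk2 : k ≤ p-1) :
    ∑ i : Fin (p-1), μ i • fDer p ((i:ℕ)+1) (X p (2*k+1)) =
      μ ⟨k-1, by omega⟩ • X p (2*k+1) := by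
  rw [Finset.sum_eq_single_of_mem (⟨k-1, by omega⟩ : Fin (p-1)) (Finset.mem_univ _)]
  · have e : ((⟨k-1, by omega⟩ : Fin (p-1)) : ℕ) + 1 = k := by simp; omega
    rw [e, fDer_X p hp k hk1 hk2 (2*k+1), if_pos rfl]
  · intro i _ hne
    have hi := i.isLt
    have hv : (i:ℕ) ≠ k-1 := fun h => hne (Fin.ext (by simpa using h))
    rw [fDer_X p hp ((i:ℕ)+1) (by omega) (by omega) (2*k+1),
      if_neg (by omega), if_neg (by omega)]
    simp

lemma sumf_Xeven (hp : 2 ≤ p) (μ : Fin (p-1) → ℂ) (k : ℕ) (hk1 : 1 ≤ k) (hk2 : k ≤ p-1) :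
    ∑ i : Fin (p-1), μ i • fDer p ((i:ℕ)+1) (X p (2*k+2)) =
      -(μ ⟨k-1, by omega⟩ • X p (2*k+2)) := by
  rw [Finset.sum_eq_single_of_mem (⟨k-1, by omega⟩ : Fin (p-1)) (Finset.mem_univ _)]
  · have e : ((⟨k-1, by omega⟩ : Fin (p-1)) : ℕ) + 1 = k := by simp; omega
    rw [e, fDer_X p hp k hk1 hk2 (2*k+2), if_neg (by omega), if_pos rfl]
    module
  · intro i _ hne
    have hi := i.isLt
    have hv : (i:ℕ) ≠ k-1 := fun h => hne (Fin.ext (by simpa using h))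
    rw [fDer_X p hp ((i:ℕ)+1) (by omega) (by omega) (2*k+2),
      if_neg (by omega), if_neg (by omega)]
    simp

lemma cancel {c a : ℂ} (hc : c ≠ 0) (h : c * a = 0) : a = 0 :=
  (mul_eq_zero.mp h).resolve_left hc

section Der

variable (hp : 2 ≤ p) (hΩ : AvoidsOmega1 p φ)
variable (D : V p →ₗ[ℂ] V p)
variable (hD : ∀ x y, D (mu p φ x y) = mu p φ (D x) y + mu p φ x (D y))
include hp hΩ hD

lemma hmain1 : D (X p 1) = coordL p 2 (D (X p 2)) • X p 1 +
    (coordL p 1 (D (X p 1)) • X p 1 +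
      ∑ k ∈ Finset.Icc 1 (p-1),
        ((-(φ k * coordL p (2*k+1) (D (X p 1)))) • X p (2*k+1)
          + ((1+φ k) * coordL p (2*k+2) (D (X p 1))) • X p (2*k+2))) := by
  have h := hD (X p 2) (X p 1)
  rw [mu_X1 p φ hp (X p 2), coordL_X p 2 2 (by omega) (by omega), if_pos rfl, one_smul,
    mu_X1 p φ hp (D (X p 2)), mu_X2_left p φ hp (D (X p 1))] at h
  exact h

lemma DX1_coord (m : ℕ) (hm1 : 2 ≤ m) (hm2 : m ≤ 2*p) : coordL p m (D (X p 1)) = 0 := by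
  have hc := DFunLike.congr_arg (coordL p m) (hmain1 p φ hp hΩ D hD)
  simp only [map_add, map_smul, smul_eq_mul] at hc
  rw [coordL_comb p (fun k => -(φ k * coordL p (2*k+1) (D (X p 1))))
      (fun k => (1+φ k) * coordL p (2*k+2) (D (X p 1))) m (by omega) hm2,
    coordL_X p m 1 (by omega) hm2] at hc
  rcases vec_cases p m (by omega) hm2 with rfl | rfl | ⟨k, hk1, hk2, rfl⟩ | ⟨k, hk1, hk2, rfl⟩
  · omega
  · rw [if_neg (by omega), if_neg (by omega)] at hc
    linear_combination hc
  · rw [if_neg (by omega), if_pos (by omega), if_pos (by omega)] at hc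
    have e : (2*k+1)/2 = k := by omega
    rw [e] at hc
    have h1 : φ k ≠ -1 := (hΩ k k hk1 hk2 hk1 hk2).2.2.2.2.1
    refine cancel (c := 1 + φ k) (fun hh => h1 (by linear_combination hh)) ?_
    linear_combination hc
  · rw [if_neg (by omega), if_pos (by omega), if_neg (by omega)] at hc
    have e : (2*k+2)/2 - 1 = k := by omega
    rw [e] at hc
    have h1 : φ k ≠ 0 := (hΩ k k hk1 hk2 hk1 hk2).2.2.2.1
    refine cancel (c := φ k) h1 ?_
    linear_combination - hc

lemma DX1_eq : D (X p 1) = coordL p 1 (D (X p 1)) • X p 1 := by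
  apply vext p
  intro m hm1 hm2
  rw [map_smul, smul_eq_mul, coordL_X p m 1 hm1 hm2]
  by_cases h1 : m = 1
  · subst h1; rw [if_pos rfl]; ring
  · rw [if_neg h1, DX1_coord p φ hp hΩ D hD m (by omega) hm2]; ring

lemma DX2_coord2 : coordL p 2 (D (X p 2)) = 0 := by
  have hc := DFunLike.congr_arg (coordL p 1) (hmain1 p φ hp hΩ D hD)
  simp only [map_add, map_smul, smul_eq_mul] at hc
  rw [coordL_comb p (fun k => -(φ k * coordL p (2*k+1) (D (X p 1))))
      (fun k => (1+φ k) * coordL p (2*k+2) (D (X p 1))) 1 (by omega) (by omega),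
    coordL_X p 1 1 (by omega) (by omega), if_pos rfl, if_neg (by omega)] at hc
  linear_combination -hc

lemma hmain_odd (k : ℕ) (hk1 : 1 ≤ k) (hk2 : k ≤ p-1) :
    (-(φ k)) • D (X p (2*k+1)) =
      (coordL p (2*k+2) (D (X p 2)) • X p 1
        + (-(φ k * coordL p 2 (D (X p 2)))) • X p (2*k+1))
      + (coordL p 1 (D (X p (2*k+1))) • X p 1 +
          ∑ k' ∈ Finset.Icc 1 (p-1),
            ((-(φ k' * coordL p (2*k'+1) (D (X p (2*k+1))))) • X p (2*k'+1)
              + ((1+φ k') * coordL p (2*k'+2) (D (X p (2*k+1)))) • X p (2*k'+2))) := by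
  have h := hD (X p 2) (X p (2*k+1))
  have e0 : mu p φ (X p 2) (X p (2*k+1)) = (-(φ k)) • X p (2*k+1) := by
    rw [mu_Xodd p φ hp k hk1 hk2 (X p 2),
      coordL_X p (2*k+2) 2 (by omega) (by omega), if_neg (by omega),
      coordL_X p 2 2 (by omega) (by omega), if_pos rfl]
    module
  rw [e0, map_smul, mu_Xodd p φ hp k hk1 hk2 (D (X p 2)),
    mu_X2_left p φ hp (D (X p (2*k+1)))] at h
  exact h

lemma DXodd_coord (k : ℕ) (hk1 : 1 ≤ k) (hk2 : k ≤ p-1) (m : ℕ) (hm1 : 1 ≤ m)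
    (hm2 : m ≤ 2*p) (hne1 : m ≠ 1) (hne2 : m ≠ 2*k+1) :
    coordL p m (D (X p (2*k+1))) = 0 := by
  have hc := DFunLike.congr_arg (coordL p m) (hmain_odd p φ hp hΩ D hD k hk1 hk2)
  simp only [map_add, map_smul, smul_eq_mul] at hc
  rw [coordL_comb p (fun k' => -(φ k' * coordL p (2*k'+1) (D (X p (2*k+1)))))
      (fun k' => (1+φ k') * coordL p (2*k'+2) (D (X p (2*k+1)))) m hm1 hm2,
    coordL_X p m 1 hm1 hm2, coordL_X p m (2*k+1) hm1 hm2] at hc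
  have hφ0 : φ k ≠ 0 := (hΩ k k hk1 hk2 hk1 hk2).2.2.2.1
  rcases vec_cases p m hm1 hm2 with rfl | rfl | ⟨k', hk1', hk2', rfl⟩ | ⟨k', hk1', hk2', rfl⟩
  · exact absurd rfl hne1
  · rw [if_neg (by omega), if_neg (by omega), if_neg (by omega)] at hc
    refine cancel (c := -(φ k)) (by simpa using hφ0) ?_
    linear_combination hc
  · have hkk : k' ≠ k := by omega
    rw [if_neg (by omega), if_neg (by omega), if_pos (by omega), if_pos (by omega)] at hc
    have e : (2*k'+1)/2 = k' := by omega
    rw [e] at hc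
    have hd : φ k' ≠ φ k := (hΩ k' k hk1' hk2' hk1 hk2).2.2.1 hkk
    refine cancel (c := φ k' - φ k) (sub_ne_zero.mpr hd) ?_
    linear_combination hc
  · rw [if_neg (by omega), if_neg (by omega), if_pos (by omega), if_neg (by omega)] at hc
    have e : (2*k'+2)/2 - 1 = k' := by omega
    rw [e] at hc
    have hd : 1 + φ k' + φ k ≠ 0 := (hΩ k' k hk1' hk2' hk1 hk2).1
    refine cancel (c := 1 + φ k' + φ k) hd ?_
    linear_combination -hc

lemma DXodd_eq (k : ℕ) (hk1 : 1 ≤ k) (hk2 : k ≤ p-1) :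
    D (X p (2*k+1)) = coordL p 1 (D (X p (2*k+1))) • X p 1
      + coordL p (2*k+1) (D (X p (2*k+1))) • X p (2*k+1) := by
  apply vext p
  intro m hm1 hm2
  rw [map_add, map_smul, map_smul, smul_eq_mul, smul_eq_mul,
    coordL_X p m 1 hm1 hm2, coordL_X p m (2*k+1) hm1 hm2]
  by_cases h1 : m = 1
  · subst h1; rw [if_pos rfl, if_neg (by omega)]; ring
  · rw [if_neg h1]
    by_cases h2 : m = 2*k+1
    · subst h2; rw [if_pos rfl]; ring
    · rw [if_neg h2, DXodd_coord p φ hp hΩ D hD k hk1 hk2 m hm1 hm2 h1 h2]; ring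

lemma DX2_odd (k : ℕ) (hk1 : 1 ≤ k) (hk2 : k ≤ p-1) :
    coordL p (2*k+2) (D (X p 2)) = -((1+φ k) * coordL p 1 (D (X p (2*k+1)))) := by
  have hc := DFunLike.congr_arg (coordL p 1) (hmain_odd p φ hp hΩ D hD k hk1 hk2)
  simp only [map_add, map_smul, smul_eq_mul] at hc
  rw [coordL_comb p (fun k' => -(φ k' * coordL p (2*k'+1) (D (X p (2*k+1)))))
      (fun k' => (1+φ k') * coordL p (2*k'+2) (D (X p (2*k+1)))) 1 (by omega) (by omega),
    coordL_X p 1 1 (by omega) (by omega), coordL_X p 1 (2*k+1) (by omega) (by omega),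
    if_pos rfl, if_neg (by omega), if_neg (by omega)] at hc
  linear_combination -hc

lemma hmain_even (k : ℕ) (hk1 : 1 ≤ k) (hk2 : k ≤ p-1) :
    (1+φ k) • D (X p (2*k+2)) =
      ((-(coordL p (2*k+1) (D (X p 2)))) • X p 1
        + ((1+φ k) * coordL p 2 (D (X p 2))) • X p (2*k+2))
      + (coordL p 1 (D (X p (2*k+2))) • X p 1 +
          ∑ k' ∈ Finset.Icc 1 (p-1),
            ((-(φ k' * coordL p (2*k'+1) (D (X p (2*k+2))))) • X p (2*k'+1)
              + ((1+φ k') * coordL p (2*k'+2) (D (X p (2*k+2)))) • X p (2*k'+2))) := by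
  have h := hD (X p 2) (X p (2*k+2))
  have e0 : mu p φ (X p 2) (X p (2*k+2)) = (1+φ k) • X p (2*k+2) := by
    rw [mu_Xeven p φ hp k hk1 hk2 (X p 2),
      coordL_X p (2*k+1) 2 (by omega) (by omega), if_neg (by omega),
      coordL_X p 2 2 (by omega) (by omega), if_pos rfl]
    module
  rw [e0, map_smul, mu_Xeven p φ hp k hk1 hk2 (D (X p 2)),
    mu_X2_left p φ hp (D (X p (2*k+2)))] at h
  exact h

lemma DXeven_coord (k : ℕ) (hk1 : 1 ≤ k) (hk2 : k ≤ p-1) (m : ℕ) (hm1 : 1 ≤ m)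
    (hm2 : m ≤ 2*p) (hne1 : m ≠ 1) (hne2 : m ≠ 2*k+2) :
    coordL p m (D (X p (2*k+2))) = 0 := by
  have hc := DFunLike.congr_arg (coordL p m) (hmain_even p φ hp hΩ D hD k hk1 hk2)
  simp only [map_add, map_smul, smul_eq_mul] at hc
  rw [coordL_comb p (fun k' => -(φ k' * coordL p (2*k'+1) (D (X p (2*k+2)))))
      (fun k' => (1+φ k') * coordL p (2*k'+2) (D (X p (2*k+2)))) m hm1 hm2,
    coordL_X p m 1 hm1 hm2, coordL_X p m (2*k+2) hm1 hm2] at hc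
  have hφ1 : φ k ≠ -1 := (hΩ k k hk1 hk2 hk1 hk2).2.2.2.2.1
  rcases vec_cases p m hm1 hm2 with rfl | rfl | ⟨k', hk1', hk2', rfl⟩ | ⟨k', hk1', hk2', rfl⟩
  · exact absurd rfl hne1
  · rw [if_neg (by omega), if_neg (by omega), if_neg (by omega)] at hc
    refine cancel (c := 1 + φ k) (fun hh => hφ1 (by linear_combination hh)) ?_
    linear_combination hc
  · rw [if_neg (by omega), if_neg (by omega), if_pos (by omega), if_pos (by omega)] at hc
    have e : (2*k'+1)/2 = k' := by omega
    rw [e] at hc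
    have hd : 1 + φ k' + φ k ≠ 0 := (hΩ k' k hk1' hk2' hk1 hk2).1
    refine cancel (c := 1 + φ k' + φ k) hd ?_
    linear_combination hc
  · have hkk : k' ≠ k := by omega
    rw [if_neg (by omega), if_neg (by omega), if_pos (by omega), if_neg (by omega)] at hc
    have e : (2*k'+2)/2 - 1 = k' := by omega
    rw [e] at hc
    have hd : φ k' ≠ φ k := (hΩ k' k hk1' hk2' hk1 hk2).2.2.1 hkk
    refine cancel (c := φ k' - φ k) (sub_ne_zero.mpr hd) ?_
    linear_combination -hc

lemma DXeven_eq (k : ℕ) (hk1 : 1 ≤ k) (hk2 : k ≤ p-1) :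
    D (X p (2*k+2)) = coordL p 1 (D (X p (2*k+2))) • X p 1
      + coordL p (2*k+2) (D (X p (2*k+2))) • X p (2*k+2) := by
  apply vext p
  intro m hm1 hm2
  rw [map_add, map_smul, map_smul, smul_eq_mul, smul_eq_mul,
    coordL_X p m 1 hm1 hm2, coordL_X p m (2*k+2) hm1 hm2]
  by_cases h1 : m = 1
  · subst h1; rw [if_pos rfl, if_neg (by omega)]; ring
  · rw [if_neg h1]
    by_cases h2 : m = 2*k+2
    · subst h2; rw [if_pos rfl]; ring
    · rw [if_neg h2, DXeven_coord p φ hp hΩ D hD k hk1 hk2 m hm1 hm2 h1 h2]; ring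

lemma DX2_even (k : ℕ) (hk1 : 1 ≤ k) (hk2 : k ≤ p-1) :
    coordL p (2*k+1) (D (X p 2)) = -(φ k * coordL p 1 (D (X p (2*k+2)))) := by
  have hc := DFunLike.congr_arg (coordL p 1) (hmain_even p φ hp hΩ D hD k hk1 hk2)
  simp only [map_add, map_smul, smul_eq_mul] at hc
  rw [coordL_comb p (fun k' => -(φ k' * coordL p (2*k'+1) (D (X p (2*k+2)))))
      (fun k' => (1+φ k') * coordL p (2*k'+2) (D (X p (2*k+2)))) 1 (by omega) (by omega),
    coordL_X p 1 1 (by omega) (by omega), coordL_X p 1 (2*k+2) (by omega) (by omega),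
    if_pos rfl, if_neg (by omega), if_neg (by omega)] at hc
  linear_combination hc

lemma Dtrace (k : ℕ) (hk1 : 1 ≤ k) (hk2 : k ≤ p-1) :
    coordL p 1 (D (X p 1)) = coordL p (2*k+1) (D (X p (2*k+1)))
      + coordL p (2*k+2) (D (X p (2*k+2))) := by
  have h := hD (X p (2*k+1)) (X p (2*k+2))
  have e0 : mu p φ (X p (2*k+1)) (X p (2*k+2)) = (-1 : ℂ) • X p 1 := by
    rw [mu_Xeven p φ hp k hk1 hk2 (X p (2*k+1)),
      coordL_X p (2*k+1) (2*k+1) (by omega) (by omega), if_pos rfl,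
      coordL_X p 2 (2*k+1) (by omega) (by omega), if_neg (by omega)]
    module
  rw [e0, map_smul, mu_Xeven p φ hp k hk1 hk2 (D (X p (2*k+1))),
    mu_Xodd_left p φ hp k hk1 hk2 (D (X p (2*k+2)))] at h
  have hc := DFunLike.congr_arg (coordL p 1) h
  simp only [map_add, map_smul, smul_eq_mul] at hc
  rw [coordL_X p 1 1 (by omega) (by omega), if_pos rfl,
    coordL_X p 1 (2*k+2) (by omega) (by omega), if_neg (by omega),
    coordL_X p 1 (2*k+1) (by omega) (by omega), if_neg (by omega)] at hc
  linear_combination -hc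

lemma DX2_eq : D (X p 2) = coordL p 1 (D (X p 2)) • X p 1 +
    ∑ k ∈ Finset.Icc 1 (p-1),
      ((-(φ k * coordL p 1 (D (X p (2*k+2))))) • X p (2*k+1)
        + (-((1+φ k) * coordL p 1 (D (X p (2*k+1))))) • X p (2*k+2)) := by
  apply vext p
  intro m hm1 hm2
  rw [map_add, map_smul, smul_eq_mul, coordL_X p m 1 hm1 hm2,
    coordL_comb p (fun k => -(φ k * coordL p 1 (D (X p (2*k+2)))))
      (fun k => -((1+φ k) * coordL p 1 (D (X p (2*k+1))))) m hm1 hm2]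
  rcases vec_cases p m hm1 hm2 with rfl | rfl | ⟨k, hk1, hk2, rfl⟩ | ⟨k, hk1, hk2, rfl⟩
  · rw [if_pos rfl, if_neg (by omega)]; ring
  · rw [if_neg (by omega), if_neg (by omega), DX2_coord2 p φ hp hΩ D hD]; ring
  · rw [if_neg (by omega), if_pos (by omega), if_pos (by omega)]
    have e : (2*k+1)/2 = k := by omega
    rw [e, DX2_even p φ hp hΩ D hD k hk1 hk2]; ring
  · rw [if_neg (by omega), if_pos (by omega), if_neg (by omega)]
    have e : (2*k+2)/2 - 1 = k := by omega
    rw [e, DX2_odd p φ hp hΩ D hD k hk1 hk2]; ring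

end Der
/-- if `φ` avoids `Ω₁` then each `f_i` (`1 ≤ i ≤ p−1`) is a
derivation of `F_φ`, and every derivation `D` of `F_φ` is uniquely
`D = ad(x) + λ_1 f_1 + … + λ_{p−1} f_{p−1}` (note `ad(x) = mu p φ x`). -/
theorem stmt4 (p : ℕ) (hp : 2 ≤ p) (φ : ℕ → ℂ) (hΩ : AvoidsOmega1 p φ) :
    (∀ i : ℕ, 1 ≤ i → i ≤ p - 1 → fDer p i ∈ derSub p (mu p φ)) ∧
    (∀ D ∈ derSub p (mu p φ), ∃! c : V p × (Fin (p-1) → ℂ),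
      D = mu p φ c.1 + ∑ i : Fin (p-1), c.2 i • fDer p ((i : ℕ) + 1)) := by
  constructor
  · intro i hi1 hi2
    exact fDer_deriv p φ hp i hi1 hi2
  · intro D hD
    have hD' : ∀ x y, D (mu p φ x y) = mu p φ (D x) y + mu p φ x (D y) := hD
    set C : V p := (-(coordL p 1 (D (X p 2)))) • X p 1 + coordL p 1 (D (X p 1)) • X p 2
        + ∑ k ∈ Finset.Icc 1 (p-1),
            ((-(coordL p 1 (D (X p (2*k+2))))) • X p (2*k+1)
              + coordL p 1 (D (X p (2*k+1))) • X p (2*k+2)) with hC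
    set lam : Fin (p-1) → ℂ := fun i => coordL p (2*((i:ℕ)+1)+1) (D (X p (2*((i:ℕ)+1)+1)))
        + φ ((i:ℕ)+1) * coordL p 1 (D (X p 1)) with hlam
    have hCco : ∀ m, 1 ≤ m → m ≤ 2*p → coordL p m C =
        -(coordL p 1 (D (X p 2))) * (if m = 1 then 1 else 0)
        + coordL p 1 (D (X p 1)) * (if m = 2 then 1 else 0)
        + (if 3 ≤ m then (if m % 2 = 1 then -(coordL p 1 (D (X p (2*(m/2)+2))))
            else coordL p 1 (D (X p (2*(m/2-1)+1)))) else 0) := by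
      intro m hm1 hm2
      rw [hC, map_add, map_add, map_smul, map_smul, smul_eq_mul, smul_eq_mul,
        coordL_X p m 1 hm1 hm2, coordL_X p m 2 hm1 hm2,
        coordL_comb p (fun k => -(coordL p 1 (D (X p (2*k+2)))))
          (fun k => coordL p 1 (D (X p (2*k+1)))) m hm1 hm2]
    have hc1 : coordL p 1 C = -(coordL p 1 (D (X p 2))) := by
      rw [hCco 1 (by omega) (by omega), if_pos rfl, if_neg (by omega), if_neg (by omega)]
      ring
    have hc2 : coordL p 2 C = coordL p 1 (D (X p 1)) := by
      rw [hCco 2 (by omega) (by omega), if_neg (by omega), if_pos rfl, if_neg (by omega)]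
      ring
    have hcodd : ∀ k, 1 ≤ k → k ≤ p-1 →
        coordL p (2*k+1) C = -(coordL p 1 (D (X p (2*k+2)))) := by
      intro k hk1 hk2
      rw [hCco (2*k+1) (by omega) (by omega), if_neg (by omega), if_neg (by omega),
        if_pos (by omega), if_pos (by omega)]
      have e : (2*k+1)/2 = k := by omega
      rw [e]; ring
    have hceven : ∀ k, 1 ≤ k → k ≤ p-1 →
        coordL p (2*k+2) C = coordL p 1 (D (X p (2*k+1))) := by
      intro k hk1 hk2
      rw [hCco (2*k+2) (by omega) (by omega), if_neg (by omega), if_neg (by omega),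
        if_pos (by omega), if_neg (by omega)]
      have e : (2*k+2)/2 - 1 = k := by omega
      rw [e]; ring
    refine ⟨⟨C, lam⟩, ?_, ?_⟩
    · dsimp only
      refine Module.Basis.ext (Pi.basisFun ℂ (Fin (2*p))) fun t => ?_
      have ht := t.isLt
      rw [X_basis p t]
      simp only [LinearMap.add_apply, LinearMap.sum_apply, LinearMap.smul_apply]
      rcases vec_cases p ((t:ℕ)+1) (by omega) (by omega) with e | e | ⟨k, hk1, hk2, e⟩
        | ⟨k, hk1, hk2, e⟩ <;> rw [e]
      · rw [DX1_eq p φ hp hΩ D hD', mu_X1 p φ hp C, hc2,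
          sumf_X0 p hp lam 1 (Or.inl rfl), add_zero]
      · rw [DX2_eq p φ hp hΩ D hD', mu_X2 p φ hp C, hc1,
          sumf_X0 p hp lam 2 (Or.inr rfl), add_zero]
        congr 1
        · module
        · refine Finset.sum_congr rfl fun k hk => ?_
          simp only [Finset.mem_Icc] at hk
          rw [hcodd k hk.1 hk.2, hceven k hk.1 hk.2]
          module
      · have e1 : lam ⟨k-1, (by omega : k-1 < p-1)⟩ =
            coordL p (2*k+1) (D (X p (2*k+1))) + φ k * coordL p 1 (D (X p 1)) := by
          rw [hlam]
          show coordL p (2*((k-1)+1)+1) (D (X p (2*((k-1)+1)+1)))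
            + φ ((k-1)+1) * coordL p 1 (D (X p 1)) = _
          have e : (k-1)+1 = k := by omega
          rw [e]
        rw [DXodd_eq p φ hp hΩ D hD' k hk1 hk2, mu_Xodd p φ hp k hk1 hk2 C,
          hceven k hk1 hk2, hc2, sumf_Xodd p hp lam k hk1 hk2, e1]
        module
      · have e1 : lam ⟨k-1, (by omega : k-1 < p-1)⟩ =
            coordL p (2*k+1) (D (X p (2*k+1))) + φ k * coordL p 1 (D (X p 1)) := by
          rw [hlam]
          show coordL p (2*((k-1)+1)+1) (D (X p (2*((k-1)+1)+1)))
            + φ ((k-1)+1) * coordL p 1 (D (X p 1)) = _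
          have e : (k-1)+1 = k := by omega
          rw [e]
        rw [DXeven_eq p φ hp hΩ D hD' k hk1 hk2, mu_Xeven p φ hp k hk1 hk2 C,
          hcodd k hk1 hk2, hc2, sumf_Xeven p hp lam k hk1 hk2, e1,
          show coordL p (2*k+2) (D (X p (2*k+2)))
            = coordL p 1 (D (X p 1)) - coordL p (2*k+1) (D (X p (2*k+1))) from by
              linear_combination -Dtrace p φ hp hΩ D hD' k hk1 hk2]
        module
    · rintro ⟨v, μ⟩ h
      dsimp only at h
      have hv2 : coordL p 2 v = coordL p 1 (D (X p 1)) := by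
        have h1 := LinearMap.congr_fun h (X p 1)
        simp only [LinearMap.add_apply, LinearMap.sum_apply, LinearMap.smul_apply] at h1
        rw [mu_X1 p φ hp v, sumf_X0 p hp μ 1 (Or.inl rfl), add_zero] at h1
        have hc := DFunLike.congr_arg (coordL p 1) h1
        rw [map_smul, smul_eq_mul, coordL_X p 1 1 (by omega) (by omega), if_pos rfl] at hc
        linear_combination -hc
      have hv1 : coordL p 1 v = -(coordL p 1 (D (X p 2))) := by
        have h1 := LinearMap.congr_fun h (X p 2)
        simp only [LinearMap.add_apply, LinearMap.sum_apply, LinearMap.smul_apply] at h1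
        rw [mu_X2 p φ hp v, sumf_X0 p hp μ 2 (Or.inr rfl), add_zero] at h1
        have hc := DFunLike.congr_arg (coordL p 1) h1
        simp only [map_add, map_smul, smul_eq_mul] at hc
        rw [coordL_X p 1 1 (by omega) (by omega), if_pos rfl,
          coordL_comb p (fun k => φ k * coordL p (2*k+1) v)
            (fun k => -((1+φ k) * coordL p (2*k+2) v)) 1 (by omega) (by omega),
          if_neg (by omega)] at hc
        linear_combination hc
      have hvodd : ∀ k, 1 ≤ k → k ≤ p-1 →
          coordL p (2*k+1) v = -(coordL p 1 (D (X p (2*k+2)))) := by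
        intro k hk1 hk2
        have h1 := LinearMap.congr_fun h (X p (2*k+2))
        simp only [LinearMap.add_apply, LinearMap.sum_apply, LinearMap.smul_apply] at h1
        rw [mu_Xeven p φ hp k hk1 hk2 v, sumf_Xeven p hp μ k hk1 hk2] at h1
        have hc := DFunLike.congr_arg (coordL p 1) h1
        simp only [map_add, map_smul, map_neg, smul_eq_mul] at hc
        rw [coordL_X p 1 1 (by omega) (by omega), if_pos rfl,
          coordL_X p 1 (2*k+2) (by omega) (by omega), if_neg (by omega)] at hc
        linear_combination hc
      have hveven : ∀ k, 1 ≤ k → k ≤ p-1 →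
          coordL p (2*k+2) v = coordL p 1 (D (X p (2*k+1))) := by
        intro k hk1 hk2
        have h1 := LinearMap.congr_fun h (X p (2*k+1))
        simp only [LinearMap.add_apply, LinearMap.sum_apply, LinearMap.smul_apply] at h1
        rw [mu_Xodd p φ hp k hk1 hk2 v, sumf_Xodd p hp μ k hk1 hk2] at h1
        have hc := DFunLike.congr_arg (coordL p 1) h1
        simp only [map_add, map_smul, smul_eq_mul] at hc
        rw [coordL_X p 1 1 (by omega) (by omega), if_pos rfl,
          coordL_X p 1 (2*k+1) (by omega) (by omega), if_neg (by omega)] at hc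
        linear_combination -hc
      have hμ : ∀ i : Fin (p-1), μ i =
          coordL p (2*((i:ℕ)+1)+1) (D (X p (2*((i:ℕ)+1)+1)))
            + φ ((i:ℕ)+1) * coordL p 1 (D (X p 1)) := by
        intro i
        have hi := i.isLt
        set k := (i:ℕ)+1 with hk
        have hk1 : 1 ≤ k := by omega
        have hk2 : k ≤ p-1 := by omega
        have h1 := LinearMap.congr_fun h (X p (2*k+1))
        simp only [LinearMap.add_apply, LinearMap.sum_apply, LinearMap.smul_apply] at h1
        rw [mu_Xodd p φ hp k hk1 hk2 v, sumf_Xodd p hp μ k hk1 hk2] at h1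
        have hc := DFunLike.congr_arg (coordL p (2*k+1)) h1
        simp only [map_add, map_smul, smul_eq_mul] at hc
        rw [coordL_X p (2*k+1) 1 (by omega) (by omega), if_neg (by omega),
          coordL_X p (2*k+1) (2*k+1) (by omega) (by omega), if_pos rfl] at hc
        have e2 : (⟨k-1, (by omega : k-1 < p-1)⟩ : Fin (p-1)) = i :=
          Fin.ext (by simp [hk])
        rw [e2, hv2] at hc
        linear_combination -hc
      have hveq : v = C := by
        apply vext p
        intro m hm1 hm2
        rcases vec_cases p m hm1 hm2 with rfl | rfl | ⟨k, hk1, hk2, rfl⟩ | ⟨k, hk1, hk2, rfl⟩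
        · rw [hv1, hc1]
        · rw [hv2, hc2]
        · rw [hvodd k hk1 hk2, hcodd k hk1 hk2]
        · rw [hveven k hk1 hk2, hceven k hk1 hk2]
      have hμeq : μ = lam := by
        funext i
        rw [hμ i]
      rw [Prod.mk.injEq]
      exact ⟨hveq, hμeq⟩
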